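/- Let A ∈ M_{m,n}(r,c) and let A* ∈ M_{n,m}(c,r) be the block matrix with blocks (A*)_{ji} = (A_{ij})* (the conjugate transpose of each block, with the block array transposed). Then cap(A)^{1/(nc)} = (nc/(mr)) · cap(A*)^{1/(mr)}. -/

import Mathlib

open Matrix BigOperators
open scoped ComplexOrder

noncomputable section

/-- The capacity of a block matrix `A ∈ M_{m,n}(r,c)`. -/
def cap {m n r c : ℕ} (A : Fin m → Fin n → Matrix (Fin r) (Fin c) ℂ) : ℝ :=
  sInf { z : ℝ | ∃ X : Fin m → Matrix (Fin r) (Fin r) ℂ,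
    (∀ i, (X i).PosDef) ∧ (∏ i, (X i).det) = 1 ∧
    z = ∏ j, ((((n : ℂ) * c / ((m : ℂ) * r)) • ∑ i, (A i j)ᴴ * X i * A i j).det).re }

namespace CapAux
open Complex

variable {k : ℕ}

lemma amgm (hk : 0 < k) (x : Fin k → ℝ) (hx : ∀ i, 0 ≤ x i) :
    (k : ℝ) * (∏ i, x i) ^ ((k:ℝ)⁻¹) ≤ ∑ i, x i := by
  have hk' : (0:ℝ) < k := by exact_mod_cast hk
  have h1 : (∏ i, x i) ^ ((k:ℝ)⁻¹) = ∏ i, (x i) ^ ((k:ℝ)⁻¹) :=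
    (Real.finset_prod_rpow _ _ (fun i _ => hx i) _).symm
  have h2 : ∏ i, (x i) ^ ((k:ℝ)⁻¹) ≤ ∑ i, (k:ℝ)⁻¹ * x i := by
    refine Real.geom_mean_le_arith_mean_weighted _ _ _ (fun i _ => by positivity) ?_
      (fun i _ => hx i)
    simp [Finset.sum_const, Finset.card_univ]
    field_simp
  calc (k:ℝ) * (∏ i, x i) ^ ((k:ℝ)⁻¹) ≤ (k:ℝ) * ∑ i, (k:ℝ)⁻¹ * x i := by
        rw [h1]; exact mul_le_mul_of_nonneg_left h2 hk'.le
    _ = ∑ i, x i := by rw [← Finset.mul_sum, ← mul_assoc, mul_inv_cancel₀ hk'.ne', one_mul]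

/-- the determinant of a PSD matrix is a nonneg real -/
lemma psd_det_re_nonneg {P : Matrix (Fin k) (Fin k) ℂ} (hP : P.PosSemidef) :
    0 ≤ P.det.re ∧ P.det = (P.det.re : ℂ) := by
  have h := hP.isHermitian.det_eq_prod_eigenvalues
  have h2 : P.det = ((∏ i, hP.isHermitian.eigenvalues i : ℝ) : ℂ) := by
    rw [h]; push_cast; rfl
  rw [h2, Complex.ofReal_re]
  exact ⟨Finset.prod_nonneg fun i _ => hP.eigenvalues_nonneg i, rfl⟩

/-- trace of a PSD matrix equals the (real) sum of eigenvalues -/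
lemma psd_trace_eq {P : Matrix (Fin k) (Fin k) ℂ} (hP : P.PosSemidef) :
    P.trace = ((∑ i, hP.isHermitian.eigenvalues i : ℝ) : ℂ) := by
  set hH := hP.isHermitian
  have h := hH.spectral_theorem
  have hU : (star (hH.eigenvectorUnitary : Matrix (Fin k) (Fin k) ℂ)) *
      (hH.eigenvectorUnitary : Matrix (Fin k) (Fin k) ℂ) = 1 := by
    exact Unitary.coe_star_mul_self _
  calc P.trace = ((hH.eigenvectorUnitary : Matrix (Fin k) (Fin k) ℂ) *
        diagonal (RCLike.ofReal ∘ hH.eigenvalues) *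
        (star (hH.eigenvectorUnitary : Matrix (Fin k) (Fin k) ℂ))).trace := by conv_lhs => rw [h, Unitary.conjStarAlgAut_apply]
    _ = ((star (hH.eigenvectorUnitary : Matrix (Fin k) (Fin k) ℂ)) *
        (hH.eigenvectorUnitary : Matrix (Fin k) (Fin k) ℂ) *
        diagonal (RCLike.ofReal ∘ hH.eigenvalues)).trace := by rw [trace_mul_cycle]
    _ = (diagonal (RCLike.ofReal ∘ hH.eigenvalues)).trace := by rw [hU, one_mul]
    _ = ((∑ i, hH.eigenvalues i : ℝ) : ℂ) := by
        rw [trace_diagonal]; push_cast; rfl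

lemma psd_trace_re_nonneg {P : Matrix (Fin k) (Fin k) ℂ} (hP : P.PosSemidef) :
    0 ≤ P.trace.re := by
  rw [psd_trace_eq hP, Complex.ofReal_re]
  exact Finset.sum_nonneg fun i _ => hP.eigenvalues_nonneg i

/-- AM-GM for psd matrix: k * det^{1/k} ≤ trace -/
lemma psd_amgm (hk : 0 < k) {P : Matrix (Fin k) (Fin k) ℂ} (hP : P.PosSemidef) :
    (k:ℝ) * P.det.re ^ ((k:ℝ)⁻¹) ≤ P.trace.re := by
  have ht := psd_trace_eq hP
  have hdet : P.det.re = ∏ i, hP.isHermitian.eigenvalues i := by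
    have h2 : P.det = ((∏ i, hP.isHermitian.eigenvalues i : ℝ) : ℂ) := by
      rw [hP.isHermitian.det_eq_prod_eigenvalues]; push_cast; rfl
    rw [h2, Complex.ofReal_re]
  have htr : P.trace.re = ∑ i, hP.isHermitian.eigenvalues i := by rw [ht, Complex.ofReal_re]
  rw [hdet, htr]
  exact amgm hk _ fun i => hP.eigenvalues_nonneg i

open scoped MatrixOrder in
/-- trace AM-GM for a product of psd matrices -/
lemma trace_mul_amgm (hk : 0 < k) {P Q : Matrix (Fin k) (Fin k) ℂ}
    (hP : P.PosSemidef) (hQ : Q.PosSemidef) :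
    (k:ℝ) * (P.det.re * Q.det.re) ^ ((k:ℝ)⁻¹) ≤ ((P * Q).trace).re := by
  set S := CFC.sqrt Q with hS
  have hSh : S.PosSemidef := (CFC.sqrt_nonneg Q).posSemidef
  have hSS : S * S = Q := CFC.sqrt_mul_sqrt_self Q hQ.nonneg
  have hH : (Sᴴ * P * S).PosSemidef := hP.conjTranspose_mul_mul_same S
  have hSH : Sᴴ = S := hSh.isHermitian
  have htr : (P * Q).trace = (Sᴴ * P * S).trace := by
    rw [hSH, ← hSS, ← mul_assoc, trace_mul_comm (P * S) S, ← mul_assoc]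
  have hdet : (Sᴴ * P * S).det = P.det * Q.det := by
    rw [det_mul, det_mul, hSH, ← hSS, det_mul]; ring
  have hre : (Sᴴ * P * S).det.re = P.det.re * Q.det.re := by
    obtain ⟨_, hP2⟩ := psd_det_re_nonneg hP
    obtain ⟨_, hQ2⟩ := psd_det_re_nonneg hQ
    rw [hdet, hP2, hQ2]; simp
  have := psd_amgm hk hH
  rw [hre] at this
  rw [htr]
  exact this

lemma trace_mul_re_nonneg (hk : 0 < k) {P Q : Matrix (Fin k) (Fin k) ℂ}
    (hP : P.PosSemidef) (hQ : Q.PosSemidef) : 0 ≤ ((P * Q).trace).re := by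
  refine le_trans ?_ (trace_mul_amgm hk hP hQ)
  have h1 := (psd_det_re_nonneg hP).1
  have h2 := (psd_det_re_nonneg hQ).1
  exact mul_nonneg (Nat.cast_nonneg k) (Real.rpow_nonneg (mul_nonneg h1 h2) _)

lemma posDef_smul {M : Matrix (Fin k) (Fin k) ℂ} (hM : M.PosDef) {a : ℝ} (ha : 0 < a) :
    ((a : ℂ) • M).PosDef := by
  refine PosDef.of_dotProduct_mulVec_pos ?_ fun x hx => ?_
  · unfold Matrix.IsHermitian
    rw [conjTranspose_smul, hM.isHermitian.eq]
    simp
  · rw [smul_mulVec, dotProduct_smul, smul_eq_mul]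
    have := hM.dotProduct_mulVec_pos hx
    have ha' : (0:ℂ) < (a:ℂ) := by exact_mod_cast ha
    exact mul_pos ha' this

lemma posSemidef_smul {M : Matrix (Fin k) (Fin k) ℂ} (hM : M.PosSemidef) {a : ℝ} (ha : 0 ≤ a) :
    ((a : ℂ) • M).PosSemidef := by
  refine PosSemidef.of_dotProduct_mulVec_nonneg ?_ fun x => ?_
  · unfold Matrix.IsHermitian
    rw [conjTranspose_smul, hM.isHermitian.eq]
    simp
  · rw [smul_mulVec, dotProduct_smul, smul_eq_mul]
    have := hM.dotProduct_mulVec_nonneg x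
    have ha' : (0:ℂ) ≤ (a:ℂ) := by exact_mod_cast ha
    exact mul_nonneg ha' this

lemma psd_vecMulVec (v : Fin k → ℂ) : (vecMulVec v (star v)).PosSemidef := by
  rw [vecMulVec_eq (Fin 1), ← conjTranspose_replicateCol]
  exact posSemidef_self_mul_conjTranspose _

lemma trace_mul_vecMulVec (M : Matrix (Fin k) (Fin k) ℂ) (v w : Fin k → ℂ) :
    (M * vecMulVec v w).trace = w ⬝ᵥ (M *ᵥ v) := by
  simp only [Matrix.trace, Matrix.diag, Matrix.mul_apply, vecMulVec_apply, Matrix.mulVec,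
    dotProduct, Finset.mul_sum]
  refine Finset.sum_congr rfl fun i _ => Finset.sum_congr rfl fun j _ => by ring

/-- determinant of a rank one perturbation of a scalar matrix -/
lemma det_smul_one_add_vecMulVec (δ β : ℂ) (hδ : δ ≠ 0) (v : Fin k → ℂ) :
    ((δ • (1 : Matrix (Fin k) (Fin k) ℂ)) + β • vecMulVec v (star v)).det
      = δ ^ k * (1 + (β / δ) * (star v ⬝ᵥ v)) := by
  have h : (δ • (1 : Matrix (Fin k) (Fin k) ℂ)) + β • vecMulVec v (star v)
      = δ • ((1 : Matrix (Fin k) (Fin k) ℂ) + replicateCol (Fin 1) ((β/δ) • v) * replicateRow (Fin 1) (star v)) := by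
    rw [smul_add, vecMulVec_eq (Fin 1), replicateCol_smul, smul_mul, smul_smul]
    congr 2
    field_simp
  rw [h, det_smul, show ((1 : Matrix (Fin k) (Fin k) ℂ) + replicateCol (Fin 1) ((β/δ) • v) * replicateRow (Fin 1) (star v)).det
      = 1 + star v ⬝ᵥ ((β/δ) • v) from det_one_add_replicateCol_mul_replicateRow _ _, Fintype.card_fin]
  congr 1
  rw [dotProduct_smul, smul_eq_mul]

open scoped MatrixOrder in
lemma psd_posDef_of_det_ne_zero {M : Matrix (Fin k) (Fin k) ℂ} (hM : M.PosSemidef)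
    (h : M.det ≠ 0) : M.PosDef := by
  obtain ⟨B, hB⟩ : ∃ B : Matrix (Fin k) (Fin k) ℂ, M = Bᴴ * B :=
    ⟨CFC.sqrt M, by rw [(CFC.sqrt_nonneg M).posSemidef.isHermitian.eq, CFC.sqrt_mul_sqrt_self M hM.nonneg]⟩
  have hdetB : B.det ≠ 0 := by
    intro h0
    apply h
    rw [hB, det_mul, h0, mul_zero]
  refine PosDef.of_dotProduct_mulVec_pos hM.isHermitian fun x hx => ?_
  have hBx : B *ᵥ x ≠ 0 := by
    intro h0
    apply hx
    have := congrArg (fun w => B⁻¹ *ᵥ w) h0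
    simpa [mulVec_mulVec, Matrix.nonsing_inv_mul B (by simpa using hdetB), mulVec_zero] using this
  rw [hB, ← mulVec_mulVec, dotProduct_mulVec, vecMul_conjTranspose, star_star]
  exact dotProduct_star_self_pos_iff.mpr hBx

lemma aux_pow {t : ℝ} (ht : 0 ≤ t) {k : ℕ} (hk : 0 < k) {D : ℝ} (hD : 0 ≤ D) :
    (t ^ k * D) ^ ((k:ℝ)⁻¹) = t * D ^ ((k:ℝ)⁻¹) := by
  have hk' : ((k:ℝ)) ≠ 0 := by exact_mod_cast hk.ne'
  rw [Real.mul_rpow (pow_nonneg ht _) hD, ← Real.rpow_natCast t k, ← Real.rpow_mul ht,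
    mul_inv_cancel₀ hk', Real.rpow_one]

end CapAux
namespace CapProof
open Complex

variable {m n r c : ℕ}

def Mblk (A : Fin m → Fin n → Matrix (Fin r) (Fin c) ℂ)
    (X : Fin m → Matrix (Fin r) (Fin r) ℂ) (j : Fin n) : Matrix (Fin c) (Fin c) ℂ :=
  ∑ i, (A i j)ᴴ * X i * A i j

def feas {k d : ℕ} (X : Fin k → Matrix (Fin d) (Fin d) ℂ) : Prop :=
  (∀ i, (X i).PosDef) ∧ (∏ i, (X i).det) = 1

def tset (A : Fin m → Fin n → Matrix (Fin r) (Fin c) ℂ) : Set ℝ :=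
  { z | ∃ X Y, feas X ∧ feas Y ∧ z = ∑ j, ((Mblk A X j * Y j).trace).re }

lemma feas_one {k d : ℕ} : feas (fun _ : Fin k => (1 : Matrix (Fin d) (Fin d) ℂ)) :=
  ⟨fun _ => Matrix.PosDef.one, by simp⟩

lemma feas_prod_det_re {k d : ℕ} {X : Fin k → Matrix (Fin d) (Fin d) ℂ} (hX : feas X) :
    ∏ i, ((X i).det.re) = 1 := by
  have h : ((∏ i, ((X i).det.re) : ℝ) : ℂ) = 1 := by
    rw [Complex.ofReal_prod,
      Finset.prod_congr rfl
        (fun i _ => ((CapAux.psd_det_re_nonneg (hX.1 i).posSemidef).2).symm)]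
    exact hX.2
  exact_mod_cast h

lemma Mblk_psd (A : Fin m → Fin n → Matrix (Fin r) (Fin c) ℂ)
    {X : Fin m → Matrix (Fin r) (Fin r) ℂ} (hX : ∀ i, (X i).PosDef) (j : Fin n) :
    (Mblk A X j).PosSemidef := by
  unfold Mblk
  refine Finset.sum_induction _ _ (fun a b ha hb => ha.add hb) Matrix.PosSemidef.zero
    (fun i _ => ((hX i).posSemidef).conjTranspose_mul_mul_same (A i j))

lemma scalar_eq :
    ((n:ℂ) * c / ((m:ℂ) * r)) = ((((n:ℝ) * c / ((m:ℝ) * r) : ℝ)) : ℂ) := by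
  push_cast; ring

lemma capval (A : Fin m → Fin n → Matrix (Fin r) (Fin c) ℂ)
    {X : Fin m → Matrix (Fin r) (Fin r) ℂ} (hX : ∀ i, (X i).PosDef) :
    ∏ j, ((((n:ℂ) * c / ((m:ℂ) * r)) • ∑ i, (A i j)ᴴ * X i * A i j).det).re
      = ((n:ℝ) * c / ((m:ℝ) * r)) ^ (n * c) * ∏ j, (Mblk A X j).det.re := by
  set t : ℝ := (n:ℝ) * c / ((m:ℝ) * r) with hts
  have hfac : ∀ j, ((((n:ℂ) * c / ((m:ℂ) * r)) • ∑ i, (A i j)ᴴ * X i * A i j).det).re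
      = t ^ c * (Mblk A X j).det.re := by
    intro j
    have hpsd := Mblk_psd A hX j
    have hdet := (CapAux.psd_det_re_nonneg hpsd).2
    rw [scalar_eq]
    show (((t:ℂ) • Mblk A X j).det).re = _
    rw [det_smul, Fintype.card_fin, hdet,
      show ((t:ℂ) ^ c * (((Mblk A X j).det.re : ℝ) : ℂ))
        = (((t ^ c * (Mblk A X j).det.re : ℝ)) : ℂ) by push_cast; ring,
      Complex.ofReal_re]
    simp
  rw [Finset.prod_congr rfl (fun j _ => hfac j), Finset.prod_mul_distrib, Finset.prod_const,
    Finset.card_univ, Fintype.card_fin, ← pow_mul, mul_comm c n]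

lemma tset_nonneg (hc : 0 < c) (A : Fin m → Fin n → Matrix (Fin r) (Fin c) ℂ)
    {z : ℝ} (hz : z ∈ tset A) : 0 ≤ z := by
  obtain ⟨X, Y, hX, hY, rfl⟩ := hz
  exact Finset.sum_nonneg fun j _ =>
    CapAux.trace_mul_re_nonneg hc (Mblk_psd A hX.1 j) (hY.1 j).posSemidef

lemma tset_nonempty (A : Fin m → Fin n → Matrix (Fin r) (Fin c) ℂ) : (tset A).Nonempty :=
  ⟨_, fun _ => 1, fun _ => 1, feas_one, feas_one, rfl⟩

lemma tset_bddBelow (hc : 0 < c) (A : Fin m → Fin n → Matrix (Fin r) (Fin c) ℂ) :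
    BddBelow (tset A) :=
  ⟨0, fun _ hz => tset_nonneg hc A hz⟩

lemma trace_conj_swap (U : Matrix (Fin r) (Fin c) ℂ) (X : Matrix (Fin r) (Fin r) ℂ)
    (Y : Matrix (Fin c) (Fin c) ℂ) :
    (Uᴴ * X * U * Y).trace = (U * Y * Uᴴ * X).trace := by
  calc (Uᴴ * X * U * Y).trace = ((Uᴴ * X) * (U * Y)).trace := by rw [Matrix.mul_assoc]
    _ = ((U * Y) * (Uᴴ * X)).trace := trace_mul_comm _ _
    _ = (U * Y * Uᴴ * X).trace := by rw [← Matrix.mul_assoc]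

lemma sum_trace_swap (A : Fin m → Fin n → Matrix (Fin r) (Fin c) ℂ)
    (X : Fin m → Matrix (Fin r) (Fin r) ℂ) (Y : Fin n → Matrix (Fin c) (Fin c) ℂ) :
    ∑ j, ((Mblk A X j * Y j).trace).re
      = ∑ i, ((Mblk (fun (j : Fin n) (i : Fin m) => (A i j)ᴴ) Y i * X i).trace).re := by
  have key : ∀ j i, (((A i j)ᴴ * X i * A i j) * Y j).trace
      = (((A i j)ᴴᴴ * Y j * (A i j)ᴴ) * X i).trace := by
    intro j i
    rw [conjTranspose_conjTranspose]
    exact trace_conj_swap (A i j) (X i) (Y j)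
  calc ∑ j, ((Mblk A X j * Y j).trace).re
      = ∑ j, ∑ i, ((((A i j)ᴴ * X i * A i j) * Y j).trace).re := by
        refine Finset.sum_congr rfl fun j _ => ?_
        rw [Mblk, Finset.sum_mul, trace_sum, Complex.re_sum]
    _ = ∑ i, ∑ j, ((((A i j)ᴴᴴ * Y j * (A i j)ᴴ) * X i).trace).re := by
        rw [Finset.sum_comm]
        exact Finset.sum_congr rfl fun i _ => Finset.sum_congr rfl fun j _ => by rw [key]
    _ = ∑ i, ((Mblk (fun (j : Fin n) (i : Fin m) => (A i j)ᴴ) Y i * X i).trace).re := by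
        refine Finset.sum_congr rfl fun i _ => ?_
        rw [Mblk, Finset.sum_mul, trace_sum, Complex.re_sum]

lemma tset_conj_subset (A : Fin m → Fin n → Matrix (Fin r) (Fin c) ℂ) :
    tset (fun (j : Fin n) (i : Fin m) => (A i j)ᴴ) ⊆ tset A := by
  rintro z ⟨Y, X, hY, hX, rfl⟩
  exact ⟨X, Y, hX, hY, (sum_trace_swap A X Y).symm⟩

lemma tset_conj (A : Fin m → Fin n → Matrix (Fin r) (Fin c) ℂ) :
    tset (fun (j : Fin n) (i : Fin m) => (A i j)ᴴ) = tset A := by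
  refine le_antisymm (tset_conj_subset A) ?_
  have h := tset_conj_subset (fun (j : Fin n) (i : Fin m) => (A i j)ᴴ)
  simpa [conjTranspose_conjTranspose] using h

end CapProof
namespace CapProof
open Complex

variable {m n r c : ℕ}

lemma re_ofReal_mul (a : ℝ) (z : ℂ) : ((a:ℂ) * z).re = a * z.re := by
  simp [Complex.mul_re]

lemma sum_trace_lower (hn : 0 < n) (hc : 0 < c) (A : Fin m → Fin n → Matrix (Fin r) (Fin c) ℂ)
    {X : Fin m → Matrix (Fin r) (Fin r) ℂ} {Y : Fin n → Matrix (Fin c) (Fin c) ℂ}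
    (hX : feas X) (hY : feas Y) :
    ((n:ℝ) * c) * (∏ j, (Mblk A X j).det.re) ^ (((n:ℝ) * (c:ℝ))⁻¹)
      ≤ ∑ j, ((Mblk A X j * Y j).trace).re := by
  set dM := fun j => (Mblk A X j).det.re with hdM'
  set dY := fun j => (Y j).det.re with hdY'
  have hdM : ∀ j, 0 ≤ dM j := fun j => (CapAux.psd_det_re_nonneg (Mblk_psd A hX.1 j)).1
  have hdY : ∀ j, 0 ≤ dY j := fun j => (CapAux.psd_det_re_nonneg (hY.1 j).posSemidef).1
  have h1 : ∀ j, (c:ℝ) * (dM j * dY j) ^ ((c:ℝ)⁻¹) ≤ ((Mblk A X j * Y j).trace).re :=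
    fun j => CapAux.trace_mul_amgm hc (Mblk_psd A hX.1 j) (hY.1 j).posSemidef
  have h2 : ∑ j, (c:ℝ) * (dM j * dY j) ^ ((c:ℝ)⁻¹) ≤ ∑ j, ((Mblk A X j * Y j).trace).re :=
    Finset.sum_le_sum fun j _ => h1 j
  have h3 : (n:ℝ) * (∏ j, (dM j * dY j) ^ ((c:ℝ)⁻¹)) ^ ((n:ℝ)⁻¹)
      ≤ ∑ j, (dM j * dY j) ^ ((c:ℝ)⁻¹) :=
    CapAux.amgm hn _ fun j => Real.rpow_nonneg (mul_nonneg (hdM j) (hdY j)) _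
  have h4 : ∏ j, (dM j * dY j) ^ ((c:ℝ)⁻¹) = (∏ j, dM j) ^ ((c:ℝ)⁻¹) := by
    rw [Real.finset_prod_rpow _ _ (fun j _ => mul_nonneg (hdM j) (hdY j)) _,
      Finset.prod_mul_distrib, feas_prod_det_re hY, mul_one]
  have hDnn : 0 ≤ ∏ j, dM j := Finset.prod_nonneg fun j _ => hdM j
  have h5 : ((∏ j, dM j) ^ ((c:ℝ)⁻¹)) ^ ((n:ℝ)⁻¹) = (∏ j, dM j) ^ (((n:ℝ) * (c:ℝ))⁻¹) := by
    rw [← Real.rpow_mul hDnn, mul_inv]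
    ring_nf
  calc ((n:ℝ) * c) * (∏ j, dM j) ^ (((n:ℝ) * (c:ℝ))⁻¹)
      = (c:ℝ) * ((n:ℝ) * ((∏ j, dM j) ^ ((c:ℝ)⁻¹)) ^ ((n:ℝ)⁻¹)) := by rw [h5]; ring
    _ = (c:ℝ) * ((n:ℝ) * (∏ j, (dM j * dY j) ^ ((c:ℝ)⁻¹)) ^ ((n:ℝ)⁻¹)) := by rw [h4]
    _ ≤ (c:ℝ) * ∑ j, (dM j * dY j) ^ ((c:ℝ)⁻¹) := by
        refine mul_le_mul_of_nonneg_left h3 (by positivity)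
    _ = ∑ j, (c:ℝ) * (dM j * dY j) ^ ((c:ℝ)⁻¹) := by rw [Finset.mul_sum]
    _ ≤ _ := h2

lemma stepA_posdef (hn : 0 < n) (hc : 0 < c)
    (A : Fin m → Fin n → Matrix (Fin r) (Fin c) ℂ)
    {X : Fin m → Matrix (Fin r) (Fin r) ℂ} (hX : feas X)
    (hpd : ∀ j, (Mblk A X j).PosDef) :
    (((n:ℝ) * c) * (∏ j, (Mblk A X j).det.re) ^ (((n:ℝ) * (c:ℝ))⁻¹)) ∈ tset A := by
  set D := ∏ j, (Mblk A X j).det.re with hD'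
  have hdMpos : ∀ j, 0 < (Mblk A X j).det.re := by
    intro j
    have h := (hpd j).det_pos
    rw [Complex.lt_def] at h
    simpa using h.1
  have hDpos : 0 < D := Finset.prod_pos fun j _ => hdMpos j
  set α := D ^ (((n:ℝ) * (c:ℝ))⁻¹) with hα'
  have hαpos : 0 < α := Real.rpow_pos_of_pos hDpos _
  set Y := fun j => (α:ℂ) • (Mblk A X j)⁻¹ with hY'
  have hYpd : ∀ j, (Y j).PosDef := fun j => CapAux.posDef_smul (hpd j).inv hαpos
  have hdet_j : ∀ j, (Y j).det = (α:ℂ) ^ c * ((Mblk A X j).det)⁻¹ := by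
    intro j
    rw [hY', det_smul, Fintype.card_fin, det_nonsing_inv, Ring.inverse_eq_inv]
  have hprodM : (∏ j, (Mblk A X j).det) = (D:ℂ) := by
    rw [hD', Complex.ofReal_prod]
    exact Finset.prod_congr rfl fun j _ => (CapAux.psd_det_re_nonneg (Mblk_psd A hX.1 j)).2
  have hαpow : α ^ (c * n) = D := by
    rw [hα', ← Real.rpow_natCast (D ^ (((n:ℝ) * (c:ℝ))⁻¹)) (c * n), ← Real.rpow_mul hDpos.le]
    rw [show ((n:ℝ) * (c:ℝ))⁻¹ * ((c * n : ℕ) : ℝ) = 1 by push_cast; field_simp]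
    exact Real.rpow_one D
  have hYdet : (∏ j, (Y j).det) = 1 := by
    rw [Finset.prod_congr rfl fun j _ => hdet_j j, Finset.prod_mul_distrib,
      Finset.prod_const, Finset.card_univ, Fintype.card_fin, ← pow_mul,
      Finset.prod_inv_distrib, hprodM]
    rw [show ((α:ℂ)) ^ (c * n) = ((α ^ (c * n) : ℝ) : ℂ) by push_cast; ring, hαpow]
    rw [← Complex.ofReal_inv, ← Complex.ofReal_mul, mul_inv_cancel₀ hDpos.ne']
    simp
  refine ⟨X, Y, hX, ⟨hYpd, hYdet⟩, ?_⟩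
  have htr : ∀ j, ((Mblk A X j * Y j).trace).re = α * c := by
    intro j
    have hiu : IsUnit (Mblk A X j).det := (isUnit_iff_ne_zero).mpr (hpd j).det_pos.ne'
    rw [hY', mul_smul_comm, Matrix.mul_nonsing_inv _ hiu, trace_smul, trace_one]
    rw [smul_eq_mul, re_ofReal_mul]
    simp
  rw [Finset.sum_congr rfl fun j _ => htr j, Finset.sum_const, Finset.card_univ,
    Fintype.card_fin]
  push_cast
  ring

lemma stepA_sing (hn : 0 < n) (hc : 0 < c)
    (A : Fin m → Fin n → Matrix (Fin r) (Fin c) ℂ)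
    {X : Fin m → Matrix (Fin r) (Fin r) ℂ} (hX : feas X)
    (hpd : ¬ ∀ j, (Mblk A X j).PosDef) :
    sInf (tset A) ≤ 0 := by
  push_neg at hpd
  obtain ⟨j0, hj0⟩ := hpd
  have hdet0 : (Mblk A X j0).det = 0 := by
    by_contra h
    exact hj0 (CapAux.psd_posDef_of_det_ne_zero (Mblk_psd A hX.1 j0) h)
  obtain ⟨v, hv0, hv⟩ := (Matrix.exists_mulVec_eq_zero_iff).mpr hdet0
  set s' : ℝ := (star v ⬝ᵥ v).re with hs''
  have hsdot : 0 < (star v ⬝ᵥ v) := dotProduct_star_self_pos_iff.mpr hv0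
  have hsc : (star v ⬝ᵥ v) = (s' : ℂ) := by
    rw [Complex.lt_def] at hsdot
    apply Complex.ext
    · simp [hs'']
    · simp [← hsdot.2]
  have hs'pos : 0 < s' := by
    rw [Complex.lt_def] at hsdot
    simpa using hsdot.1
  set C0 := ∑ j, ((Mblk A X j).trace).re with hC0'
  have hC0 : 0 ≤ C0 :=
    Finset.sum_nonneg fun j _ => CapAux.psd_trace_re_nonneg (Mblk_psd A hX.1 j)
  refine le_of_forall_pos_le_add fun ε hε => ?_
  rw [zero_add]
  set δ := min 1 (ε / (C0 + 1)) with hδ'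
  have hδpos : 0 < δ := lt_min one_pos (by positivity)
  have hδ1 : δ ≤ 1 := min_le_left _ _
  have hδC : δ * C0 ≤ ε := by
    calc δ * C0 ≤ (ε / (C0 + 1)) * C0 :=
          mul_le_mul_of_nonneg_right (min_le_right _ _) hC0
      _ ≤ ε := by
          rw [div_mul_eq_mul_div, div_le_iff₀ (by positivity)]
          nlinarith [hε.le, hC0]
  have hδne : (δ:ℂ) ≠ 0 := by exact_mod_cast hδpos.ne'
  set γ : ℝ := ((δ ^ (n * c))⁻¹ - 1) / s' with hγ'
  have hδpow : 0 < δ ^ (n * c) := pow_pos hδpos _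
  have hδpow1 : δ ^ (n * c) ≤ 1 := pow_le_one₀ hδpos.le hδ1
  have hinv1 : 1 ≤ (δ ^ (n * c))⁻¹ := by
    rw [show (δ ^ (n * c))⁻¹ = 1 / δ ^ (n * c) from (one_div _).symm]
    exact (le_div_iff₀ hδpow).mpr (by simpa using hδpow1)
  have hγ : 0 ≤ γ := div_nonneg (by linarith) hs'pos.le
  set β := δ * γ with hβ'
  have hβ : 0 ≤ β := mul_nonneg hδpos.le hγ
  set W := vecMulVec v (star v) with hW'
  set Y := fun j => if j = j0 then (δ:ℂ) • (1 : Matrix (Fin c) (Fin c) ℂ) + (β:ℂ) • W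
    else (δ:ℂ) • (1 : Matrix (Fin c) (Fin c) ℂ) with hYdef
  have hYpd : ∀ j, (Y j).PosDef := by
    intro j
    simp only [hYdef]
    by_cases h : j = j0
    · rw [if_pos h]
      exact (CapAux.posDef_smul Matrix.PosDef.one hδpos).add_posSemidef
        (CapAux.posSemidef_smul (CapAux.psd_vecMulVec v) hβ)
    · rw [if_neg h]
      exact CapAux.posDef_smul Matrix.PosDef.one hδpos
  have hY0det : (Y j0).det = (δ:ℂ) ^ c * (((δ ^ (n * c))⁻¹ : ℝ) : ℂ) := by
    have h1 : (Y j0).det = (δ:ℂ) ^ c * (1 + ((β:ℂ) / (δ:ℂ)) * (star v ⬝ᵥ v)) := by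
      simp only [hYdef, if_pos]
      exact CapAux.det_smul_one_add_vecMulVec (δ:ℂ) (β:ℂ) hδne v
    rw [h1, hsc]
    congr 1
    rw [show ((β:ℂ) / (δ:ℂ)) = ((γ:ℝ) : ℂ) by
      rw [hβ']; push_cast; field_simp]
    rw [show (1 : ℂ) + ((γ:ℝ):ℂ) * ((s':ℝ):ℂ) = (((1 + γ * s' : ℝ)) : ℂ) by push_cast; ring]
    congr 1
    rw [hγ']
    field_simp
    ring
  have hYdet : (∏ j, (Y j).det) = 1 := by
    rw [← Finset.mul_prod_erase Finset.univ _ (Finset.mem_univ j0)]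
    have h_other : ∀ j ∈ Finset.univ.erase j0, (Y j).det = (δ:ℂ) ^ c := by
      intro j hj
      simp only [hYdef]
      rw [if_neg (Finset.mem_erase.mp hj).1]
      rw [det_smul, det_one, Fintype.card_fin, mul_one]
    rw [Finset.prod_congr rfl h_other, Finset.prod_const, Finset.card_erase_of_mem
      (Finset.mem_univ j0), Finset.card_univ, Fintype.card_fin, hY0det]
    rw [show ((δ:ℂ) ^ c) ^ (n - 1) = (δ:ℂ) ^ (c * (n - 1)) from (pow_mul _ _ _).symm]
    rw [mul_assoc, mul_comm (((δ ^ (n * c))⁻¹ : ℝ) : ℂ) _, ← mul_assoc, ← pow_add]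
    rw [show c + c * (n - 1) = n * c by
      have h : 1 + (n - 1) = n := by omega
      calc c + c * (n - 1) = c * (1 + (n - 1)) := by ring
        _ = c * n := by rw [h]
        _ = n * c := by ring]
    rw [show ((δ:ℂ)) ^ (n * c) = ((δ ^ (n * c) : ℝ) : ℂ) by push_cast; ring]
    rw [← Complex.ofReal_mul, mul_inv_cancel₀ hδpow.ne']
    simp
  have htr : ∀ j, ((Mblk A X j * Y j).trace).re = δ * ((Mblk A X j).trace).re := by
    intro j
    have hbase : (Mblk A X j * ((δ:ℂ) • (1 : Matrix (Fin c) (Fin c) ℂ))).trace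
        = (δ:ℂ) * (Mblk A X j).trace := by
      rw [mul_smul_comm, mul_one, trace_smul, smul_eq_mul]
    simp only [hYdef]
    by_cases h : j = j0
    · rw [if_pos h]
      rw [mul_add, trace_add, hbase]
      have hW0 : (Mblk A X j * ((β:ℂ) • W)).trace = 0 := by
        rw [mul_smul_comm, trace_smul, hW', CapAux.trace_mul_vecMulVec, h, hv]
        simp
      rw [hW0, add_zero, re_ofReal_mul]
    · rw [if_neg h, hbase, re_ofReal_mul]
  have hzval : ∑ j, ((Mblk A X j * Y j).trace).re = δ * C0 := by
    rw [Finset.sum_congr rfl fun j _ => htr j, ← Finset.mul_sum, hC0']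
  have hmem : δ * C0 ∈ tset A := ⟨X, Y, hX, ⟨hYpd, hYdet⟩, hzval.symm⟩
  calc sInf (tset A) ≤ δ * C0 := csInf_le (tset_bddBelow hc A) hmem
    _ ≤ ε := hδC

end CapProof
namespace CapProof
open Complex

variable {m n r c : ℕ}

lemma qval (hm : 0 < m) (hn : 0 < n) (hr : 0 < r) (hc : 0 < c) {D : ℝ} (hD : 0 ≤ D) :
    ((m:ℝ) * r) * ((((n:ℝ) * c / ((m:ℝ) * r)) ^ (n * c)) * D) ^ (((n:ℝ) * (c:ℝ))⁻¹)
      = ((n:ℝ) * c) * D ^ (((n:ℝ) * (c:ℝ))⁻¹) := by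
  have hq : (0:ℝ) < (m:ℝ) * r := by positivity
  have hp : (0:ℝ) < (n:ℝ) * c := by positivity
  have ht : (0:ℝ) ≤ (n:ℝ) * c / ((m:ℝ) * r) := by positivity
  have hk : 0 < n * c := Nat.mul_pos hn hc
  have h := CapAux.aux_pow ht hk hD
  rw [show (((n * c : ℕ)):ℝ)⁻¹ = ((n:ℝ) * (c:ℝ))⁻¹ by push_cast; ring] at h
  rw [h, ← mul_assoc, mul_div_cancel₀ _ hq.ne']

theorem cap_eq (hm : 0 < m) (hn : 0 < n) (hr : 0 < r) (hc : 0 < c)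
    (A : Fin m → Fin n → Matrix (Fin r) (Fin c) ℂ) :
    cap A ^ ((1 : ℝ) / ((n:ℝ) * c)) = sInf (tset A) / ((m:ℝ) * r) := by
  have hq : (0:ℝ) < (m:ℝ) * r := by positivity
  have hp : (0:ℝ) < (n:ℝ) * c := by positivity
  set S : Set ℝ := { z : ℝ | ∃ X : Fin m → Matrix (Fin r) (Fin r) ℂ,
    (∀ i, (X i).PosDef) ∧ (∏ i, (X i).det) = 1 ∧
    z = ∏ j, ((((n : ℂ) * c / ((m : ℂ) * r)) • ∑ i, (A i j)ᴴ * X i * A i j).det).re }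
    with hS'
  have hcapS : cap A = sInf S := rfl
  have hSnonneg : ∀ z ∈ S, (0:ℝ) ≤ z := by
    rintro z ⟨X, hX1, hX2, rfl⟩
    rw [capval A hX1]
    have : 0 ≤ ∏ j, (Mblk A X j).det.re :=
      Finset.prod_nonneg fun j _ => (CapAux.psd_det_re_nonneg (Mblk_psd A hX1 j)).1
    positivity
  have hSne : S.Nonempty := ⟨_, fun _ => 1, fun _ => Matrix.PosDef.one, by simp, rfl⟩
  have hSbdd : BddBelow S := ⟨0, fun z hz => hSnonneg z hz⟩
  have hcap0 : 0 ≤ cap A := by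
    rw [hcapS]; exact le_csInf hSne hSnonneg
  rw [one_div]
  -- Direction 1 : cap^(1/p) ≤ sInf tset / q
  have hdir1 : cap A ^ (((n:ℝ) * (c:ℝ))⁻¹) ≤ sInf (tset A) / ((m:ℝ) * r) := by
    rw [le_div_iff₀ hq]
    refine le_csInf (tset_nonempty A) ?_
    rintro z ⟨X, Y, hX, hY, rfl⟩
    set D := ∏ j, (Mblk A X j).det.re with hD'
    have hDnn : 0 ≤ D :=
      Finset.prod_nonneg fun j _ => (CapAux.psd_det_re_nonneg (Mblk_psd A hX.1 j)).1
    have hcaple : cap A ≤ ((n:ℝ) * c / ((m:ℝ) * r)) ^ (n * c) * D := by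
      rw [hcapS]
      exact csInf_le hSbdd ⟨X, hX.1, hX.2, (capval A hX.1).symm⟩
    have h1 : cap A ^ (((n:ℝ) * (c:ℝ))⁻¹)
        ≤ (((n:ℝ) * c / ((m:ℝ) * r)) ^ (n * c) * D) ^ (((n:ℝ) * (c:ℝ))⁻¹) :=
      Real.rpow_le_rpow hcap0 hcaple (by positivity)
    have h2 := sum_trace_lower hn hc A hX hY
    calc cap A ^ (((n:ℝ) * (c:ℝ))⁻¹) * ((m:ℝ) * r)
        ≤ (((n:ℝ) * c / ((m:ℝ) * r)) ^ (n * c) * D) ^ (((n:ℝ) * (c:ℝ))⁻¹) * ((m:ℝ) * r) :=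
          mul_le_mul_of_nonneg_right h1 hq.le
      _ = ((n:ℝ) * c) * D ^ (((n:ℝ) * (c:ℝ))⁻¹) := by
          rw [mul_comm]; exact qval hm hn hr hc hDnn
      _ ≤ _ := h2
  -- Step A : for every feasible X
  have hstepA : ∀ X : Fin m → Matrix (Fin r) (Fin r) ℂ, feas X →
      sInf (tset A) ≤ ((m:ℝ) * r) *
        (((n:ℝ) * c / ((m:ℝ) * r)) ^ (n * c) * ∏ j, (Mblk A X j).det.re)
          ^ (((n:ℝ) * (c:ℝ))⁻¹) := by
    intro X hX
    have hDnn : 0 ≤ ∏ j, (Mblk A X j).det.re :=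
      Finset.prod_nonneg fun j _ => (CapAux.psd_det_re_nonneg (Mblk_psd A hX.1 j)).1
    by_cases hpd : ∀ j, (Mblk A X j).PosDef
    · have hmem := stepA_posdef hn hc A hX hpd
      calc sInf (tset A) ≤ ((n:ℝ) * c) * (∏ j, (Mblk A X j).det.re) ^ (((n:ℝ) * (c:ℝ))⁻¹) :=
            csInf_le (tset_bddBelow hc A) hmem
        _ = _ := (qval hm hn hr hc hDnn).symm
    · refine le_trans (stepA_sing hn hc A hX hpd) ?_
      positivity
  -- Direction 2 : via epsilon
  have hdir2 : sInf (tset A) / ((m:ℝ) * r) ≤ cap A ^ (((n:ℝ) * (c:ℝ))⁻¹) := by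
    have heps : ∀ ε : ℝ, 0 < ε →
        sInf (tset A) / ((m:ℝ) * r) ≤ (cap A + ε) ^ (((n:ℝ) * (c:ℝ))⁻¹) := by
      intro ε hε
      obtain ⟨z, hzS, hzlt⟩ := exists_lt_of_csInf_lt hSne
        (show sInf S < cap A + ε by rw [← hcapS]; linarith)
      obtain ⟨X, hX1, hX2, rfl⟩ := hzS
      have hXfeas : feas X := ⟨hX1, hX2⟩
      rw [capval A hX1] at hzlt
      have hDnn : 0 ≤ ∏ j, (Mblk A X j).det.re :=
        Finset.prod_nonneg fun j _ => (CapAux.psd_det_re_nonneg (Mblk_psd A hX1 j)).1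
      have h1 := hstepA X hXfeas
      have h2 : (((n:ℝ) * c / ((m:ℝ) * r)) ^ (n * c) * ∏ j, (Mblk A X j).det.re)
            ^ (((n:ℝ) * (c:ℝ))⁻¹) ≤ (cap A + ε) ^ (((n:ℝ) * (c:ℝ))⁻¹) :=
        Real.rpow_le_rpow (by positivity) hzlt.le (by positivity)
      rw [div_le_iff₀ hq]
      calc sInf (tset A) ≤ _ := h1
        _ ≤ ((m:ℝ) * r) * (cap A + ε) ^ (((n:ℝ) * (c:ℝ))⁻¹) :=
            mul_le_mul_of_nonneg_left h2 hq.le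
        _ = (cap A + ε) ^ (((n:ℝ) * (c:ℝ))⁻¹) * ((m:ℝ) * r) := by ring
    have hcont : Filter.Tendsto (fun ε : ℝ => (cap A + ε) ^ (((n:ℝ) * (c:ℝ))⁻¹))
        (nhdsWithin 0 (Set.Ioi 0)) (nhds (cap A ^ (((n:ℝ) * (c:ℝ))⁻¹))) := by
      have hadd : Filter.Tendsto (fun ε : ℝ => cap A + ε) (nhdsWithin 0 (Set.Ioi 0))
          (nhds (cap A)) := by
        have : Filter.Tendsto (fun ε : ℝ => cap A + ε) (nhds 0) (nhds (cap A + 0)) :=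
          (continuous_const.add continuous_id).tendsto 0
        rw [add_zero] at this
        exact this.mono_left nhdsWithin_le_nhds
      have hrpow : ContinuousAt (fun x : ℝ => x ^ (((n:ℝ) * (c:ℝ))⁻¹)) (cap A) :=
        Real.continuousAt_rpow_const _ _ (Or.inr (by positivity))
      exact hrpow.tendsto.comp hadd
    exact ge_of_tendsto hcont
      (eventually_mem_nhdsWithin.mono fun ε hε => heps ε (Set.mem_Ioi.mp hε))
  exact le_antisymm hdir1 hdir2

end CapProof

/-- Claim 2.8: relation between the capacity of `A` and of its block conjugate transpose. -/
theorem cap_conjTranspose {m n r c : ℕ}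
    (hm : 0 < m) (hn : 0 < n) (hr : 0 < r) (hc : 0 < c)
    (A : Fin m → Fin n → Matrix (Fin r) (Fin c) ℂ) :
    cap A ^ ((1 : ℝ) / ((n : ℝ) * c)) =
      ((n : ℝ) * c / ((m : ℝ) * r)) *
        cap (fun (j : Fin n) (i : Fin m) => (A i j)ᴴ) ^ ((1 : ℝ) / ((m : ℝ) * r)) := by
  have h1 := CapProof.cap_eq hm hn hr hc A
  have h2 := CapProof.cap_eq hn hm hc hr (fun (j : Fin n) (i : Fin m) => (A i j)ᴴ)
  rw [CapProof.tset_conj A] at h2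
  rw [h1, h2]
  have hq : ((m:ℝ) * r) ≠ 0 := by positivity
  have hp : ((n:ℝ) * c) ≠ 0 := by positivity
  field_simp
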